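/- Let X = (x_1, …, x_N) and Y = (y_1, …, y_N) be decreasing sequences of natural numbers with ∑_{k=1}^N x_k = ∑_{k=1}^N y_k and X ≼ Y. Then Y can be obtained from X by a finite number of basic transfers: there is a finite sequence of decreasing natural-number sequences X = Z_0, Z_1, …, Z_m = Y such that each Z_{t+1} is the decreasing rearrangement of the sequence obtained from Z_t by adding 1 to one entry and subtracting 1 from another (positive) entry. -/

import Mathlib

/-- Degree of a vertex `v` in a simple graph `G` on a finite vertex set. -/
noncomputable def deg {V : Type*} [Fintype V] (G : SimpleGraph V) (v : V) : ℕ :=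
  letI := Classical.decEq V
  letI := Classical.decRel G.Adj
  G.degree v

/-- The degree sequence of a graph on `Fin N`, arranged in decreasing order. -/
noncomputable def degSeq {N : ℕ} (G : SimpleGraph (Fin N)) : List ℕ :=
  ((Finset.univ.val.map (deg G)).sort (· ≤ ·)).reverse

/-- Generalized (prefix-sum) majorization: `X ≼ Y`. -/
def Maj (X Y : List ℕ) : Prop := ∀ j : ℕ, (X.take j).sum ≤ (Y.take j).sum

/-- A basic tree transfer: choose an edge `{v,w}` with `deg v ≥ 2` and a vertex `u ≠ v` with
`deg u ≥ deg v` lying in the same connected component as `v` after deleting the edge `{v,w}`;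
delete the edge `{v,w}` and add the edge `{u,w}`. -/
def BasicTreeTransfer {V : Type*} [Fintype V] (T T' : SimpleGraph V) : Prop :=
  ∃ v w u : V, T.Adj v w ∧ 2 ≤ deg T v ∧ u ≠ v ∧ deg T v ≤ deg T u ∧
    (T.deleteEdges {s(v, w)}).Reachable u v ∧
    T' = (T.deleteEdges {s(v, w)}) ⊔ SimpleGraph.fromEdgeSet {s(u, w)}

/-- The decreasing rearrangement of a list of naturals. -/
noncomputable def sortDesc (l : List ℕ) : List ℕ :=
  (Multiset.sort (↑l : Multiset ℕ) (· ≤ ·)).reverse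

/-- A path (chain) graph: a tree in which every vertex has degree at most 2. -/
def IsPathGraph {V : Type*} [Fintype V] (G : SimpleGraph V) : Prop :=
  G.IsTree ∧ ∀ v, deg G v ≤ 2

/-- The degree sequence of the chain on `N ≥ 2` vertices: `(2,…,2,1,1)`. -/
def chainSeq (N : ℕ) : List ℕ := List.replicate (N - 2) 2 ++ List.replicate 2 1

/-- A basic transfer on a decreasing list: add 1 to entry `i`, subtract 1 from entry `j ≥ 1`,
and rearrange in decreasing order. -/
def BasicTransfer (X Y : List ℕ) : Prop :=
  ∃ i j : ℕ, i < X.length ∧ j < X.length ∧ i ≠ j ∧ 1 ≤ X.getD j 0 ∧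
    Y = sortDesc ((X.set i (X.getD i 0 + 1)).set j (X.getD j 0 - 1))

lemma myTakeSum (l : List ℕ) : ∀ k, (l.take k).sum = ∑ m ∈ Finset.range k, l.getD m 0 := by
  intro k
  induction k with
  | zero => simp
  | succ k ih =>
    rcases lt_or_ge k l.length with h | h
    · rw [List.sum_take_succ l k h, Finset.sum_range_succ, ih, List.getD_eq_getElem l 0 h]
    · rw [Finset.sum_range_succ, ← ih, List.getD_eq_default l 0 h,
        List.take_of_length_le h, List.take_of_length_le (le_trans h (Nat.le_succ k)), add_zero]

lemma mySortDescEq (l : List ℕ) (h : l.Pairwise (· ≥ ·)) : sortDesc l = l := by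
  unfold sortDesc
  have h1 : (Multiset.sort (↑l : Multiset ℕ) (· ≤ ·)) = l.reverse := by
    refine (fun hp h1 h2 => List.Perm.eq_of_pairwise' (r := (· ≤ ·)) h1 h2 hp) ?_ ?_ ?_
    · have h2 : (↑(Multiset.sort (↑l : Multiset ℕ) (· ≤ ·)) : Multiset ℕ) = ↑l :=
        Multiset.sort_eq _ _
      exact (Multiset.coe_eq_coe.mp h2).trans l.reverse_perm.symm
    · exact Multiset.pairwise_sort _ _
    · rw [List.pairwise_reverse]
      exact h
  rw [h1, List.reverse_reverse]

lemma myGetDAnti (l : List ℕ) (h : l.Pairwise (· ≥ ·)) {a b : ℕ} (hab : a ≤ b) :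
    l.getD b 0 ≤ l.getD a 0 := by
  rcases lt_or_ge b l.length with hb | hb
  · have ha : a < l.length := lt_of_le_of_lt hab hb
    rw [List.getD_eq_getElem l 0 hb, List.getD_eq_getElem l 0 ha]
    rcases eq_or_lt_of_le hab with rfl | hlt
    · exact le_refl _
    · exact (List.pairwise_iff_getElem.mp h) a b ha hb hlt
  · rw [List.getD_eq_default l 0 hb]; exact Nat.zero_le _

lemma mySortedOfGetD (l : List ℕ) (h : ∀ a b, a < b → b < l.length → l.getD b 0 ≤ l.getD a 0) :
    l.Pairwise (· ≥ ·) := by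
  rw [List.pairwise_iff_getElem]
  intro a b ha hb hab
  have := h a b hab hb
  rwa [List.getD_eq_getElem l 0 hb, List.getD_eq_getElem l 0 ha] at this


def muM (Y X : List ℕ) : ℕ :=
  ∑ k ∈ Finset.range (Y.length + 1), ((Y.take k).sum - (X.take k).sum)

lemma myStep (Y X : List ℕ) (hlen : X.length = Y.length) (hXs : X.Pairwise (· ≥ ·))
    (hYs : Y.Pairwise (· ≥ ·)) (hsum : X.sum = Y.sum) (hmaj : Maj X Y) (hne : X ≠ Y) :
    ∃ X', BasicTransfer X X' ∧ X'.length = Y.length ∧ X'.Pairwise (· ≥ ·) ∧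
      X'.sum = Y.sum ∧ Maj X' Y ∧ muM Y X' < muM Y X := by
  set N := Y.length with hN
  -- a first index where X and Y differ
  have hex : ∃ k, X.getD k 0 ≠ Y.getD k 0 := by
    by_contra hc
    push_neg at hc
    apply hne
    apply List.ext_getElem hlen
    intro n h1 h2
    have := hc n
    rwa [List.getD_eq_getElem X 0 h1, List.getD_eq_getElem Y 0 h2] at this
  set i := Nat.find hex with hidef
  have hi : X.getD i 0 ≠ Y.getD i 0 := Nat.find_spec hex
  have himin : ∀ k, k < i → X.getD k 0 = Y.getD k 0 := by
    intro k hk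
    have := Nat.find_min hex hk
    simpa using this
  have hiN : i < N := by
    by_contra h
    push_neg at h
    apply hi
    rw [List.getD_eq_default X 0 (by omega), List.getD_eq_default Y 0 (by omega)]
  have hpe : ∀ k, k ≤ i → (X.take k).sum = (Y.take k).sum := by
    intro k hk
    rw [myTakeSum, myTakeSum]
    exact Finset.sum_congr rfl fun m hm =>
      himin m (by have := Finset.mem_range.mp hm; omega)
  have hxiyi : X.getD i 0 < Y.getD i 0 := by
    have h1 := hmaj (i + 1)
    rw [myTakeSum, myTakeSum, Finset.sum_range_succ, Finset.sum_range_succ] at h1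
    have h2 : ∑ m ∈ Finset.range i, X.getD m 0 = ∑ m ∈ Finset.range i, Y.getD m 0 := by
      rw [← myTakeSum, ← myTakeSum]
      exact hpe i le_rfl
    omega
  -- a first index after i where X exceeds Y
  have hexj : ∃ j, i < j ∧ Y.getD j 0 < X.getD j 0 := by
    by_contra hc
    push_neg at hc
    have hlt : (X.take N).sum < (Y.take N).sum := by
      rw [myTakeSum, myTakeSum]
      apply Finset.sum_lt_sum
      · intro m _
        rcases lt_trichotomy m i with h | h | h
        · exact le_of_eq (himin m h)
        · rw [h]; exact le_of_lt hxiyi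
        · exact hc m h
      · exact ⟨i, Finset.mem_range.mpr hiN, hxiyi⟩
    rw [List.take_of_length_le (le_of_eq hlen), List.take_of_length_le le_rfl] at hlt
    omega
  set j0 := Nat.find hexj with hj0def
  have hj0 : i < j0 ∧ Y.getD j0 0 < X.getD j0 0 := Nat.find_spec hexj
  have hj0min : ∀ k, i < k → k < j0 → X.getD k 0 ≤ Y.getD k 0 := by
    intro k h1 h2
    have := Nat.find_min hexj h2
    push_neg at this
    exact this h1
  have hj0N : j0 < N := by
    by_contra h
    push_neg at h
    have : X.getD j0 0 = 0 := List.getD_eq_default X 0 (by omega)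
    omega
  have hxj0pos : 1 ≤ X.getD j0 0 := by omega
  -- the last index with the same value as x j0
  set j' := Nat.findGreatest (fun k => X.getD j0 0 ≤ X.getD k 0) (N - 1) with hj'def
  have hj0j' : j0 ≤ j' := Nat.le_findGreatest (by omega) le_rfl
  have hj'P : X.getD j0 0 ≤ X.getD j' 0 :=
    Nat.findGreatest_spec (P := fun k => X.getD j0 0 ≤ X.getD k 0) (m := j0) (n := N - 1)
      (by omega) le_rfl
  have hj'N : j' < N := by
    have := Nat.findGreatest_le (P := fun k => X.getD j0 0 ≤ X.getD k 0) (N - 1)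
    omega
  have hxj' : X.getD j' 0 = X.getD j0 0 := le_antisymm (myGetDAnti X hXs hj0j') hj'P
  have hj'max : ∀ k, j' < k → X.getD k 0 < X.getD j0 0 := by
    intro k hk
    rcases le_or_gt k (N - 1) with h | h
    · have := Nat.findGreatest_is_greatest (P := fun k => X.getD j0 0 ≤ X.getD k 0) hk h
      omega
    · have : X.getD k 0 = 0 := List.getD_eq_default X 0 (by omega)
      omega
  have hij' : i < j' := lt_of_lt_of_le hj0.1 hj0j'
  set X' := (X.set i (X.getD i 0 + 1)).set j' (X.getD j' 0 - 1) with hX'def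
  have hlen' : X'.length = N := by simp [hX'def, hlen]
  have hx' : ∀ k, X'.getD k 0 =
      if k = j' then X.getD j' 0 - 1 else if k = i then X.getD i 0 + 1 else X.getD k 0 := by
    intro k
    rcases lt_or_ge k N with hk | hk
    · have hk' : k < X'.length := by omega
      rw [List.getD_eq_getElem _ 0 hk']
      simp only [hX'def, List.getElem_set]
      split_ifs <;>
        first
          | rfl
          | omega
          | exact (List.getD_eq_getElem X 0 (by omega)).symm
    · rw [List.getD_eq_default _ 0 (by omega), if_neg (by omega), if_neg (by omega),
        List.getD_eq_default X 0 (by omega)]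
  have hpx' : ∀ k, (X'.take k).sum = (X.take k).sum + (if i < k ∧ k ≤ j' then 1 else 0) := by
    intro k
    rw [myTakeSum, myTakeSum]
    rcases le_or_gt k i with hk | hk
    · rw [if_neg (by omega), add_zero]
      apply Finset.sum_congr rfl
      intro m hm
      have hm' := Finset.mem_range.mp hm
      rw [hx' m, if_neg (by omega), if_neg (by omega)]
    rcases le_or_gt k j' with hk2 | hk2
    · rw [if_pos ⟨hk, hk2⟩]
      have hcg : ∀ m ∈ Finset.range k,
          X'.getD m 0 = X.getD m 0 + (if m = i then 1 else 0) := by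
        intro m hm
        have hm' := Finset.mem_range.mp hm
        rw [hx' m, if_neg (by omega)]
        by_cases h : m = i
        · rw [if_pos h, if_pos h, h]
        · rw [if_neg h, if_neg h, add_zero]
      rw [Finset.sum_congr rfl hcg, Finset.sum_add_distrib,
        Finset.sum_ite_eq' (Finset.range k) i (fun _ => 1),
        if_pos (Finset.mem_range.mpr hk)]
    · rw [if_neg (by omega), add_zero]
      have key : ∀ m ∈ Finset.range k,
          X'.getD m 0 + (if m = j' then 1 else 0)
            = X.getD m 0 + (if m = i then 1 else 0) := by
        intro m _
        rw [hx' m]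
        by_cases h1 : m = j'
        · rw [if_pos h1, if_pos h1, if_neg (by omega), h1]
          omega
        · rw [if_neg h1, if_neg h1, add_zero]
          by_cases h2 : m = i
          · rw [if_pos h2, if_pos h2, h2]
          · rw [if_neg h2, if_neg h2, add_zero]
      have h3 := Finset.sum_congr rfl key
      rw [Finset.sum_add_distrib, Finset.sum_add_distrib,
        Finset.sum_ite_eq' (Finset.range k) j' (fun _ => 1),
        Finset.sum_ite_eq' (Finset.range k) i (fun _ => 1),
        if_pos (Finset.mem_range.mpr (by omega : j' < k)),
        if_pos (Finset.mem_range.mpr (by omega : i < k))] at h3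
      omega
  have hsum' : X'.sum = X.sum := by
    have h1 := hpx' N
    rw [if_neg (by omega)] at h1
    rwa [List.take_of_length_le (le_of_eq hlen'), List.take_of_length_le (le_of_eq hlen),
      add_zero] at h1
  have hmaj' : Maj X' Y := by
    intro k
    rw [hpx' k]
    by_cases hc : i < k ∧ k ≤ j'
    · rw [if_pos hc]
      obtain ⟨hc1, hc2⟩ := hc
      have hstrict : (X.take k).sum < (Y.take k).sum := by
        rcases le_or_gt k j0 with hkj | hkj
        · rw [myTakeSum, myTakeSum, Finset.range_eq_Ico,
            ← Finset.sum_Ico_consecutive (fun m => X.getD m 0) (Nat.zero_le i) (le_of_lt hc1),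
            ← Finset.sum_Ico_consecutive (fun m => Y.getD m 0) (Nat.zero_le i) (le_of_lt hc1)]
          have he : ∑ m ∈ Finset.Ico 0 i, X.getD m 0 = ∑ m ∈ Finset.Ico 0 i, Y.getD m 0 := by
            rw [← Finset.range_eq_Ico, ← myTakeSum, ← myTakeSum]
            exact hpe i le_rfl
          rw [he]
          apply Nat.add_lt_add_left
          apply Finset.sum_lt_sum
          · intro m hm
            have hm' := Finset.mem_Ico.mp hm
            rcases Nat.lt_or_ge i m with h | h
            · exact hj0min m h (by omega)
            · have hmi : m = i := by omega
              rw [hmi]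
              exact le_of_lt hxiyi
          · exact ⟨i, Finset.mem_Ico.mpr ⟨le_rfl, hc1⟩, hxiyi⟩
        · have hstr : ∀ m, k ≤ m → m ≤ j' → Y.getD m 0 < X.getD m 0 := by
            intro m h1 h2
            have hxm : X.getD j' 0 ≤ X.getD m 0 := myGetDAnti X hXs h2
            have hym : Y.getD m 0 ≤ Y.getD j0 0 := myGetDAnti Y hYs (by omega)
            omega
          have hA : (X.take (j' + 1)).sum
              = (X.take k).sum + ∑ m ∈ Finset.Ico k (j' + 1), X.getD m 0 := by
            rw [myTakeSum, myTakeSum, Finset.range_eq_Ico,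
              ← Finset.sum_Ico_consecutive (fun m => X.getD m 0) (Nat.zero_le k)
                (by omega : k ≤ j' + 1), Finset.range_eq_Ico]
          have hB : (Y.take (j' + 1)).sum
              = (Y.take k).sum + ∑ m ∈ Finset.Ico k (j' + 1), Y.getD m 0 := by
            rw [myTakeSum, myTakeSum, Finset.range_eq_Ico,
              ← Finset.sum_Ico_consecutive (fun m => Y.getD m 0) (Nat.zero_le k)
                (by omega : k ≤ j' + 1), Finset.range_eq_Ico]
          have hm1 := hmaj (j' + 1)
          have hcomp : ∑ m ∈ Finset.Ico k (j' + 1), Y.getD m 0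
              < ∑ m ∈ Finset.Ico k (j' + 1), X.getD m 0 := by
            apply Finset.sum_lt_sum
            · intro m hm
              have hm' := Finset.mem_Ico.mp hm
              exact le_of_lt (hstr m hm'.1 (by omega))
            · exact ⟨k, Finset.mem_Ico.mpr ⟨le_rfl, by omega⟩, hstr k le_rfl hc2⟩
          omega
      omega
    · rw [if_neg hc, add_zero]
      exact hmaj k
  have hsort' : X'.Pairwise (· ≥ ·) := by
    apply mySortedOfGetD
    intro a b hab hb
    rw [hlen'] at hb
    rw [hx' a, hx' b]
    by_cases hb1 : b = j'
    · rw [if_pos hb1, if_neg (by omega : ¬a = j')]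
      by_cases ha2 : a = i
      · rw [if_pos ha2]
        have := myGetDAnti X hXs (le_of_lt hij')
        omega
      · rw [if_neg ha2]
        have := myGetDAnti X hXs (by omega : a ≤ j')
        omega
    · rw [if_neg hb1]
      by_cases hb2 : b = i
      · rw [if_pos hb2, if_neg (by omega : ¬a = j'), if_neg (by omega : ¬a = i)]
        have h1 := himin a (by omega)
        have h2 := myGetDAnti Y hYs (by omega : a ≤ i)
        omega
      · rw [if_neg hb2]
        by_cases ha1 : a = j'
        · rw [if_pos ha1]
          have := hj'max b (by omega)
          omega
        · rw [if_neg ha1]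
          by_cases ha2 : a = i
          · rw [if_pos ha2]
            subst ha2
            have := myGetDAnti X hXs (le_of_lt hab)
            omega
          · rw [if_neg ha2]
            exact myGetDAnti X hXs (le_of_lt hab)
  have htr : BasicTransfer X X' := by
    refine ⟨i, j', by omega, by omega, by omega, by omega, ?_⟩
    exact (mySortDescEq X' hsort').symm
  have hmu : muM Y X' < muM Y X := by
    unfold muM
    apply Finset.sum_lt_sum
    · intro k _
      have h1 := hpx' k
      have h2 : (X.take k).sum ≤ (X'.take k).sum := by
        rw [h1]
        exact Nat.le_add_right _ _
      omega
    · refine ⟨j', Finset.mem_range.mpr (by omega), ?_⟩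
      have h1 := hpx' j'
      rw [if_pos ⟨hij', le_rfl⟩] at h1
      have h2 := hmaj' j'
      omega
  exact ⟨X', htr, hlen', hsort', hsum'.trans hsum, hmaj', hmu⟩

lemma myMain (Y : List ℕ) (hYs : Y.Pairwise (· ≥ ·)) :
    ∀ n X, muM Y X ≤ n → X.length = Y.length → X.Pairwise (· ≥ ·) → X.sum = Y.sum → Maj X Y →
    ∃ (m : ℕ) (Z : ℕ → List ℕ), Z 0 = X ∧ Z m = Y ∧
      (∀ t ≤ m, (Z t).Pairwise (· ≥ ·)) ∧ ∀ t < m, BasicTransfer (Z t) (Z (t + 1)) := by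
  intro n
  induction n using Nat.strong_induction_on with
  | _ n ih =>
    intro X hmu hlen hXs hsum hmaj
    by_cases hne : X = Y
    · exact ⟨0, fun _ => X, rfl, hne, fun t _ => hXs, fun t ht => absurd ht (by omega)⟩
    · obtain ⟨X', htr, hlen', hsort', hsum', hmaj', hmu'⟩ :=
        myStep Y X hlen hXs hYs hsum hmaj hne
      have hlt : muM Y X' < n := lt_of_lt_of_le hmu' hmu
      obtain ⟨m, Z, hZ0, hZm, hZs, hZt⟩ :=
        ih (muM Y X') hlt X' le_rfl hlen' hsort' hsum' hmaj'
      refine ⟨m + 1, fun t => if t = 0 then X else Z (t - 1), by simp, ?_, ?_, ?_⟩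
      · simp only [if_neg (by omega : ¬m + 1 = 0)]
        simpa using hZm
      · intro t ht
        by_cases h : t = 0
        · simpa [h] using hXs
        · simp only [if_neg h]
          exact hZs (t - 1) (by omega)
      · intro t ht
        by_cases h : t = 0
        · subst h
          simp only [if_pos rfl, if_neg (by omega : ¬(0 : ℕ) + 1 = 0)]
          simpa [hZ0] using htr
        · simp only [if_neg h, if_neg (by omega : ¬t + 1 = 0)]
          rw [show t + 1 - 1 = (t - 1) + 1 by omega]
          exact hZt (t - 1) (by omega)

/-- Muirhead: if `X ≼ Y` for decreasing natural sequences of equal length and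
equal sum, then `Y` is obtained from `X` by finitely many basic transfers. -/
theorem stmt_11 {N : ℕ} (X Y : List ℕ)
    (hXlen : X.length = N) (hYlen : Y.length = N)
    (hXsort : X.Pairwise (· ≥ ·)) (hYsort : Y.Pairwise (· ≥ ·))
    (hsum : X.sum = Y.sum) (hmaj : Maj X Y) :
    ∃ (m : ℕ) (Z : ℕ → List ℕ), Z 0 = X ∧ Z m = Y ∧
      (∀ t ≤ m, (Z t).Pairwise (· ≥ ·)) ∧
      ∀ t < m, BasicTransfer (Z t) (Z (t + 1)) := by
  exact myMain Y hYsort (muM Y X) X le_rfl (by rw [hXlen, hYlen]) hXsort hsum hmaj
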